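/- Let λ be an infinite cardinal. The abelian group ⊕_{p prime} (ℤ(p^∞))^{(⊕λ)} (the direct sum over all primes p of λ copies of the Prüfer group ℤ(p^∞)) is a torsion abelian group of cardinality λ, and every torsion abelian group G with |G| ≤ λ admits an injective group homomorphism into it. -/

import Mathlib

open DirectSum

/-- `ℚ/ℤ`. -/
abbrev RatModInt : Type := ℚ ⧸ AddSubgroup.zmultiples (1 : ℚ)

/-- The Prüfer group `ℤ(p^∞)`: the `p`-primary component of `ℚ/ℤ`, i.e. the subgroup of
elements annihilated by some power of `p`. -/
def Prufer (p : ℕ) : AddSubgroup RatModInt where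
  carrier := {g : RatModInt | ∃ n : ℕ, p ^ n • g = 0}
  zero_mem' := ⟨0, smul_zero _⟩
  add_mem' := by
    rintro a b ⟨m, hm⟩ ⟨n, hn⟩
    refine ⟨m + n, ?_⟩
    have ha : p ^ (m + n) • a = 0 := by
      rw [pow_add, mul_comm, mul_smul, hm, smul_zero]
    have hb : p ^ (m + n) • b = 0 := by
      rw [pow_add, mul_smul, hn, smul_zero]
    rw [smul_add, ha, hb, add_zero]
  neg_mem' := by
    rintro a ⟨n, hn⟩
    exact ⟨n, by rw [smul_neg, hn, neg_zero]⟩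

/-- The direct sum, over all primes `p`, of `lam` copies of the Prüfer group `ℤ(p^∞)`. -/
abbrev PruferSum (lam : Cardinal) : Type :=
  ⨁ x : Nat.Primes × lam.out, ↥(Prufer x.1.1)

noncomputable section PruferAux

/-! ### Generic helper lemmas about `DirectSum.toAddMonoid` with "disjoint windows" -/

section Helpers
variable {ι : Type*} [DecidableEq ι] {κ : Type*} {β : ι → Type*} [∀ i, AddCommMonoid (β i)]
  {γ : κ → Type*} [∀ k, AddCommMonoid (γ k)]

theorem prufer_auxA (ψ : ∀ i, β i →+ ⨁ k, γ k) (W : ι → κ → Prop)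
    (hsupp : ∀ i b k, ¬ W i k → ψ i b k = 0) (k : κ) (hk : ∀ i, ¬ W i k) (x : ⨁ i, β i) :
    toAddMonoid ψ x k = 0 := by
  induction x using DirectSum.induction_on with
  | zero => simp
  | of i b => rw [toAddMonoid_of]; exact hsupp i b k (hk i)
  | add x y hx hy => rw [map_add, DirectSum.add_apply, hx, hy, add_zero]

theorem prufer_auxB (ψ : ∀ i, β i →+ ⨁ k, γ k) (W : ι → κ → Prop)
    (hdisj : ∀ i i', i ≠ i' → ∀ k, W i k → W i' k → False)
    (hsupp : ∀ i b k, ¬ W i k → ψ i b k = 0) {i : ι} {k : κ} (hW : W i k) (x : ⨁ i, β i) :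
    toAddMonoid ψ x k = ψ i (x i) k := by
  induction x using DirectSum.induction_on with
  | zero => simp
  | of j b =>
    rcases eq_or_ne j i with rfl | hne
    · rw [toAddMonoid_of, DirectSum.of_eq_same]
    · rw [toAddMonoid_of, DirectSum.of_eq_of_ne _ _ _ hne.symm, map_zero, hsupp j b k
        (fun hW' => hdisj j i hne k hW' hW), DirectSum.zero_apply]
  | add x y hx hy =>
    rw [map_add, DirectSum.add_apply, hx, hy, DirectSum.add_apply, map_add,
      DirectSum.add_apply]

theorem prufer_auxInj (ψ : ∀ i, β i →+ ⨁ k, γ k) (W : ι → κ → Prop)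
    (hdisj : ∀ i i', i ≠ i' → ∀ k, W i k → W i' k → False)
    (hsupp : ∀ i b k, ¬ W i k → ψ i b k = 0)
    (hinj : ∀ i, Function.Injective (ψ i)) :
    Function.Injective (toAddMonoid ψ) := by
  intro x y h
  refine DFinsupp.ext fun i => hinj i (DFinsupp.ext fun k => ?_)
  by_cases hW : W i k
  · rw [← prufer_auxB ψ W hdisj hsupp hW x, ← prufer_auxB ψ W hdisj hsupp hW y, h]
  · rw [hsupp i (x i) k hW, hsupp i (y i) k hW]

end Helpers

/-! ### An injective map `ZMod p →+ Prufer p` -/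

abbrev ratModIntMk : ℚ →+ RatModInt := QuotientAddGroup.mk' (AddSubgroup.zmultiples (1 : ℚ))

theorem prufer_exists_chi (p : ℕ) (hp : p.Prime) :
    ∃ χ : ZMod p →+ Prufer p, Function.Injective χ := by
  haveI : NeZero p := ⟨hp.pos.ne'⟩
  have hp0 : (p : ℚ) ≠ 0 := Nat.cast_ne_zero.mpr hp.pos.ne'
  have hsm : ∀ k : ℕ, k • ratModIntMk ((p : ℚ)⁻¹) = ratModIntMk ((k : ℚ) * (p : ℚ)⁻¹) :=
    fun k => by rw [← map_nsmul, nsmul_eq_mul]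
  have hzero : p • ratModIntMk ((p : ℚ)⁻¹) = 0 := by
    rw [hsm, mul_inv_cancel₀ hp0]
    exact (QuotientAddGroup.eq_zero_iff _).2 ⟨1, one_zsmul _⟩
  have hmem : ratModIntMk ((p : ℚ)⁻¹) ∈ Prufer p := ⟨1, by rw [pow_one]; exact hzero⟩
  set g0 : Prufer p := ⟨_, hmem⟩ with hg0def
  have hdvd : ∀ k : ℕ, k • g0 = 0 → p ∣ k := by
    intro k hk
    have hcoe : (↑(k • g0) : RatModInt) = k • ratModIntMk ((p : ℚ)⁻¹) := by
      rw [hg0def]; exact AddSubmonoidClass.coe_nsmul _ _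
    have h1 : ratModIntMk ((k : ℚ) * (p : ℚ)⁻¹) = 0 := by
      rw [← hsm, ← hcoe, hk]; rfl
    obtain ⟨m, hm⟩ := AddSubgroup.mem_zmultiples_iff.1 ((QuotientAddGroup.eq_zero_iff _).1 h1)
    rw [zsmul_eq_mul, mul_one] at hm
    have hq : (k : ℚ) = m * p := by
      field_simp at hm; linarith [hm]
    have hint : (k : ℤ) = m * p := by exact_mod_cast hq
    exact Int.natCast_dvd_natCast.mp ⟨m, by linarith⟩
  have hpz : (p : ℤ) • g0 = 0 := by
    rw [natCast_zsmul]
    exact Subtype.ext hzero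
  refine ⟨ZMod.lift p ⟨zmultiplesHom _ g0, by rw [zmultiplesHom_apply]; exact hpz⟩, ?_⟩
  rw [injective_iff_map_eq_zero]
  intro a ha
  obtain ⟨k, hk, rfl⟩ : ∃ k : ℕ, k < p ∧ (k : ZMod p) = a :=
    ⟨a.val, ZMod.val_lt a, ZMod.natCast_rightInverse a⟩
  have hcast : ((k : ℤ) : ZMod p) = (k : ZMod p) := by push_cast; rfl
  rw [← hcast, ZMod.lift_coe] at ha
  have ha' : k • g0 = 0 := by
    rw [← natCast_zsmul]
    rw [zmultiplesHom_apply] at ha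
    exact ha
  have hk0 : k = 0 := Nat.eq_zero_of_dvd_of_lt (hdvd k ha') hk
  rw [hk0, Nat.cast_zero]

/-! ### Divisibility of the Prüfer groups and of `PruferSum` -/

theorem prufer_div_nat (p : ℕ) (hp : p.Prime) (x : Prufer p) (n : ℕ) (hn : n ≠ 0) :
    ∃ y : Prufer p, n • y = x := by
  obtain ⟨k, hk⟩ := x.2
  set a := n.factorization p with ha
  set m := n / p ^ a with hm
  have hnm : p ^ a * m = n := Nat.ordProj_mul_ordCompl_eq_self n p
  have hpm : ¬ p ∣ m := Nat.not_dvd_ordCompl hp hn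
  have hpa : ((p : ℤ) ^ a) ≠ 0 := pow_ne_zero _ (Int.natCast_ne_zero.mpr hp.pos.ne')
  set z : RatModInt := DivisibleBy.div (x : RatModInt) ((p : ℤ) ^ a) with hz
  have hzx : ((p : ℤ) ^ a) • z = (x : RatModInt) := DivisibleBy.div_cancel _ hpa
  have hzmem : z ∈ Prufer p := by
    refine ⟨k + a, ?_⟩
    have hcst : (p : ℕ) ^ a • z = ((p : ℤ) ^ a) • z := by
      rw [← natCast_zsmul]; norm_cast
    rw [pow_add, mul_comm, mul_nsmul, hcst, hzx, hk]
  have hcop : Nat.Coprime m (p ^ k) := (Nat.Prime.coprime_iff_not_dvd hp).2 hpm |>.symm.pow_right k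
  obtain ⟨u, v, huv⟩ := Nat.isCoprime_iff_coprime.2 hcop
  have ymem : u • z ∈ Prufer p := AddSubgroup.zsmul_mem _ hzmem u
  refine ⟨⟨u • z, ymem⟩, ?_⟩
  · apply Subtype.ext
    have hcoe : ((n • (⟨u • z, ymem⟩ : Prufer p) : Prufer p) : RatModInt) = n • (u • z) :=
      AddSubmonoidClass.coe_nsmul _ _
    rw [hcoe]
    rw [← natCast_zsmul, smul_smul]
    have hxk : ((p : ℤ) ^ k) • (x : RatModInt) = 0 := by
      rw [show ((p : ℤ)) ^ k = ((p ^ k : ℕ) : ℤ) by push_cast; ring, natCast_zsmul]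
      exact hk
    have : ((n : ℤ) * u) = (u * m) * (p : ℤ) ^ a := by
      rw [← hnm]; push_cast; ring
    rw [this, mul_smul, hzx]
    have huv' : (u * (m : ℤ)) = 1 - v * (p : ℤ) ^ k := by push_cast at huv ⊢; linarith
    rw [huv', sub_smul, one_smul, mul_smul, hxk, smul_zero, sub_zero]

theorem prufer_div (p : ℕ) (hp : p.Prime) (x : Prufer p) (n : ℤ) (hn : n ≠ 0) :
    ∃ y : Prufer p, n • y = x := by
  obtain ⟨y, hy⟩ := prufer_div_nat p hp x n.natAbs (Int.natAbs_ne_zero.mpr hn)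
  rcases Int.natAbs_eq n with h | h
  · exact ⟨y, by rw [h, natCast_zsmul]; exact hy⟩
  · exact ⟨-y, by rw [h, neg_zsmul, smul_neg, neg_neg, natCast_zsmul]; exact hy⟩

def pruferSumDivisible (lam : Cardinal) : DivisibleBy (PruferSum lam) ℤ := by
  apply divisibleByOfSMulRightSurj
  intro n hn x
  classical
  refine ⟨DFinsupp.mapRange
    (fun i v => if h : v = 0 then 0 else Classical.choose (prufer_div i.1.1 i.1.2 v n hn))
    (fun i => by simp) x, ?_⟩
  apply DFinsupp.ext
  intro i
  rw [DFinsupp.smul_apply, DFinsupp.mapRange_apply]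
  by_cases h : x i = 0
  · rw [dif_pos h, smul_zero, h]
  · rw [dif_neg h]
    exact Classical.choose_spec (prufer_div i.1.1 i.1.2 (x i) n hn)

/-! ### The `p`-torsion subgroup and the socle map -/

def pTor (G : Type) [AddCommGroup G] (p : ℕ) : AddSubgroup G where
  carrier := {x | p • x = 0}
  zero_mem' := smul_zero _
  add_mem' := by
    intro a b ha hb
    simp only [Set.mem_setOf_eq] at *
    rw [smul_add, ha, hb, add_zero]
  neg_mem' := by
    intro a ha
    simp only [Set.mem_setOf_eq] at *
    rw [smul_neg, ha, neg_zero]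

variable (G : Type) [AddCommGroup G]

abbrev TorSum : Type := ⨁ q : Nat.Primes, (pTor G q.1)

def iotaHom : TorSum G →+ G :=
  DirectSum.toAddMonoid fun q => (pTor G q.1).subtype

theorem iotaHom_injective : Function.Injective (iotaHom G) := by
  classical
  rw [injective_iff_map_eq_zero]
  intro x hx
  apply DFinsupp.ext
  intro q
  rw [DFinsupp.zero_apply]
  by_cases hq : q ∈ x.support
  swap
  · exact DFinsupp.notMem_support_iff.1 hq
  have hsum : (∑ i ∈ x.support, ((x i : G))) = 0 := by
    have hrepr : iotaHom G x = ∑ i ∈ x.support, ((x i : G)) := by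
      conv_lhs => rw [← DirectSum.sum_support_of (x := x)]
      rw [map_sum]
      exact Finset.sum_congr rfl fun i _ => by rw [iotaHom, toAddMonoid_of]; rfl
    rw [← hrepr, hx]
  set n : ℕ := ∏ i ∈ x.support.erase q, (i : Nat.Primes).1 with hn
  have h1 : n • (x q : G) = 0 := by
    have hsplit : (x q : G) + ∑ i ∈ x.support.erase q, ((x i : G)) = 0 := by
      rw [Finset.add_sum_erase _ (fun i => ((x i : G))) hq]
      exact hsum
    have hkill : ∀ i ∈ x.support.erase q, n • ((x i : G)) = 0 := by
      intro i hi
      obtain ⟨t, ht⟩ := Finset.dvd_prod_of_mem (fun i : Nat.Primes => i.1) hi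
      rw [hn, ht, mul_nsmul, show (i.1 : ℕ) • (x i : G) = 0 from (x i).2, smul_zero]
    have := congrArg (fun g : G => n • g) hsplit
    simp only [smul_add, smul_zero, Finset.smul_sum] at this
    rw [Finset.sum_congr rfl hkill, Finset.sum_const, smul_zero, add_zero] at this
    exact this
  have h2 : (q : Nat.Primes).1 • (x q : G) = 0 := (x q).2
  have hcop : Nat.Coprime q.1 n := by
    apply Nat.Coprime.prod_right
    intro i hi
    have hne : q ≠ i := fun h => (Finset.ne_of_mem_erase hi h.symm).elim
    exact (Nat.coprime_primes q.2 i.2).2 fun h => hne (Subtype.ext h)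
  obtain ⟨u, v, huv⟩ := Nat.isCoprime_iff_coprime.2 hcop
  have : (x q : G) = 0 := by
    calc (x q : G) = (1 : ℤ) • (x q : G) := (one_zsmul _).symm
    _ = (u * q.1 + v * n) • (x q : G) := by rw [huv]
    _ = u • ((q.1 : ℤ) • (x q : G)) + v • ((n : ℤ) • (x q : G)) := by
        rw [add_zsmul, mul_zsmul, mul_zsmul]
    _ = 0 := by rw [natCast_zsmul, natCast_zsmul, h1, h2, smul_zero, smul_zero, add_zero]
  exact Subtype.ext this

theorem embed_pTor (lam : Cardinal) (hG : Cardinal.mk G ≤ lam) (p : Nat.Primes) :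
    ∃ φ : (pTor G p.1) →+ PruferSum lam,
      Function.Injective φ ∧ ∀ (v : pTor G p.1) (k : Nat.Primes × lam.out),
        k.1 ≠ p → φ v k = 0 := by
  classical
  haveI : Fact p.1.Prime := ⟨p.2⟩
  letI : Module (ZMod p.1) (pTor G p.1) := AddCommGroup.zmodModule (fun x => by
    apply Subtype.ext
    rw [AddSubmonoidClass.coe_nsmul]
    exact x.2)
  obtain ⟨χ, hχ⟩ := prufer_exists_chi p.1 p.2
  let b := Module.Basis.ofVectorSpace (ZMod p.1) (pTor G p.1)
  have hcard : Cardinal.mk (Module.Basis.ofVectorSpaceIndex (ZMod p.1) (pTor G p.1)) ≤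
      Cardinal.mk lam.out := by
    rw [Cardinal.mk_out]
    exact le_trans (Cardinal.mk_set_le _) (le_trans (Cardinal.mk_subtype_le _) hG)
  obtain ⟨j⟩ := Cardinal.le_def _ _ |>.1 hcard
  let ψ : ∀ _ : (Module.Basis.ofVectorSpaceIndex (ZMod p.1) (pTor G p.1)), ZMod p.1 →+ PruferSum lam :=
    fun i => (DirectSum.of (fun x : Nat.Primes × lam.out => (Prufer x.1.1)) (p, j i)).comp χ
  have hsupp : ∀ i c k, ¬ (k = (p, j i)) → ψ i c k = 0 := fun i c k hk =>
    DirectSum.of_eq_of_ne _ _ _ hk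
  have hdisj : ∀ i i', i ≠ i' → ∀ k, k = (p, j i) → k = (p, j i') → False := by
    intro i i' hne k h1 h2
    rw [h1] at h2
    exact hne (j.injective (congrArg Prod.snd h2))
  let E := (finsuppAddEquivDFinsupp (ι := Module.Basis.ofVectorSpaceIndex (ZMod p.1) (pTor G p.1))
    (M := ZMod p.1)).toAddMonoidHom
  refine ⟨((toAddMonoid ψ).comp E).comp b.repr.toLinearMap.toAddMonoidHom, ?_, ?_⟩
  · simp only [AddMonoidHom.coe_comp]
    exact ((prufer_auxInj ψ _ hdisj hsupp fun i => (DirectSum.of_injective _).comp hχ).comp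
      (finsuppAddEquivDFinsupp (M := ZMod p.1)).injective).comp b.repr.injective
  · intro v k hk
    rw [AddMonoidHom.comp_apply, AddMonoidHom.comp_apply]
    exact prufer_auxA ψ _ hsupp k (fun i h => hk (congrArg Prod.fst h)) _

end PruferAux

theorem pruferSum_universal_torsion (lam : Cardinal) (hlam : Cardinal.aleph0 ≤ lam) :
    AddMonoid.IsTorsion (PruferSum lam) ∧ Cardinal.mk (PruferSum lam) = lam ∧
      ∀ (G : Type) (_ : AddCommGroup G), AddMonoid.IsTorsion G → Cardinal.mk G ≤ lam →
        ∃ f : G →+ PruferSum lam, Function.Injective f := by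
  classical
  obtain ⟨χ2, hχ2⟩ := prufer_exists_chi 2 Nat.prime_two
  have hg2 : χ2 1 ≠ 0 := fun h => one_ne_zero (hχ2 (h.trans (map_zero χ2).symm))
  haveI : Nontrivial RatModInt :=
    nontrivial_of_ne ((χ2 1 : Prufer 2) : RatModInt) 0
      (fun h => hg2 (Subtype.ext h))
  haveI : Countable RatModInt := Quotient.mk_surjective.countable
  haveI : Nonempty lam.out := by
    rw [← Cardinal.mk_ne_zero_iff, Cardinal.mk_out]
    intro h
    rw [h, le_zero_iff] at hlam
    exact Cardinal.aleph0_ne_zero hlam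
  refine ⟨?_, ?_, ?_⟩
  · -- torsion
    intro x
    induction x using DirectSum.induction_on with
    | zero => exact IsOfFinAddOrder.zero
    | of i b =>
      obtain ⟨k, hk⟩ := b.2
      refine isOfFinAddOrder_iff_nsmul_eq_zero.2 ⟨i.1.1 ^ k, pow_pos i.1.2.pos k, ?_⟩
      rw [← map_nsmul]
      have : (i.1.1 ^ k) • b = 0 := Subtype.ext (by
        rw [AddSubmonoidClass.coe_nsmul]; exact hk)
      rw [this, map_zero]
    | add x y hx hy => exact hx.add hy
  · -- cardinality
    have hub : Cardinal.mk (PruferSum lam) ≤ lam := by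
      have hinj : Function.Injective (fun x : PruferSum lam =>
          (finsuppEquivDFinsupp (ι := Nat.Primes × lam.out) (M := RatModInt)).symm
            (DFinsupp.mapRange (fun i (v : Prufer i.1.1) => (v : RatModInt))
              (fun i => rfl) x)) := by
        intro x y h
        have h2 := (finsuppEquivDFinsupp (ι := Nat.Primes × lam.out)
          (M := RatModInt)).symm.injective h
        apply DFinsupp.ext
        intro i
        have := congrArg (fun z => z i) h2
        simp only [DFinsupp.mapRange_apply] at this
        exact Subtype.ext this
      calc Cardinal.mk (PruferSum lam)
          ≤ Cardinal.mk ((Nat.Primes × lam.out) →₀ RatModInt) := Cardinal.mk_le_of_injective hinj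
        _ = max (Cardinal.mk (Nat.Primes × lam.out)) (Cardinal.mk RatModInt) :=
            Cardinal.mk_finsupp_of_infinite _ _
        _ ≤ max lam Cardinal.aleph0 := by
            apply max_le_max
            · rw [Cardinal.mk_prod, Cardinal.lift_id, Cardinal.lift_id, Cardinal.mk_eq_aleph0,
                Cardinal.mk_out, Cardinal.mul_eq_max le_rfl hlam]
              exact max_le hlam le_rfl
            · exact Cardinal.mk_le_aleph0
        _ = lam := max_eq_left hlam
    have hlb : lam ≤ Cardinal.mk (PruferSum lam) := by
      refine le_trans (le_of_eq (Cardinal.mk_out lam).symm) ?_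
      apply Cardinal.mk_le_of_injective (f := fun i : lam.out =>
        DirectSum.of (fun x : Nat.Primes × lam.out => (Prufer x.1.1))
          ((⟨2, Nat.prime_two⟩ : Nat.Primes), i) (χ2 1))
      intro i i' h
      by_contra hne
      have hne' : ((⟨2, Nat.prime_two⟩ : Nat.Primes), i) ≠ ((⟨2, Nat.prime_two⟩ : Nat.Primes), i') :=
        fun hc => hne (congrArg Prod.snd hc)
      have := congrArg (fun z => z ((⟨2, Nat.prime_two⟩ : Nat.Primes), i)) h
      dsimp only at this
      rw [DirectSum.of_eq_same] at this
      rw [show (DirectSum.of (fun x : Nat.Primes × lam.out => (Prufer x.1.1))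
        ((⟨2, Nat.prime_two⟩ : Nat.Primes), i') (χ2 1))
          ((⟨2, Nat.prime_two⟩ : Nat.Primes), i) = 0 from
        DirectSum.of_eq_of_ne _ _ _ hne'] at this
      exact hg2 this
    exact le_antisymm hub hlb
  · -- universality
    intro G instG hGtor hGcard
    haveI : DivisibleBy (PruferSum lam) ℤ := pruferSumDivisible lam
    choose φ hφinj hφsupp using fun p : Nat.Primes => embed_pTor G lam hGcard p
    have hdisj : ∀ (q q' : Nat.Primes), q ≠ q' → ∀ k : Nat.Primes × lam.out,
        k.1 = q → k.1 = q' → False := by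
      intro q q' hne k h1 h2
      exact hne (h1 ▸ h2)
    have hf0 : Function.Injective (toAddMonoid φ) :=
      prufer_auxInj φ (fun q k => k.1 = q) hdisj
        (fun q b k hk => hφsupp q b k hk) hφinj
    obtain ⟨g, hg⟩ := (Module.Baer.of_divisible
      (PruferSum lam)).extension_property_addMonoidHom (iotaHom G) (iotaHom_injective G)
      (toAddMonoid φ)
    refine ⟨g, ?_⟩
    rw [injective_iff_map_eq_zero]
    intro a ha
    by_contra hane
    have hfin := hGtor a
    have hmpos : 0 < addOrderOf a := hfin.addOrderOf_pos
    set m := addOrderOf a with hmdef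
    have hm1 : m ≠ 1 := fun h => hane (AddMonoid.addOrderOf_eq_one_iff.mp h)
    set p := m.minFac with hpdef
    have hp : p.Prime := Nat.minFac_prime hm1
    have hpd : p ∣ m := Nat.minFac_dvd m
    set y := (m / p) • a with hydef
    have hpy : p • y = 0 := by
      rw [hydef, ← mul_nsmul, Nat.div_mul_cancel hpd]
      exact addOrderOf_nsmul_eq_zero a
    have hy0 : y ≠ 0 := by
      intro h
      have hdvd : m ∣ (m / p) := addOrderOf_dvd_of_nsmul_eq_zero h
      have hlt : m / p < m := Nat.div_lt_self hmpos hp.one_lt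
      have hpos : 0 < m / p := Nat.div_pos (Nat.minFac_le hmpos) hp.pos
      exact absurd (Nat.le_of_dvd hpos hdvd) (not_le.mpr hlt)
    set pq : Nat.Primes := ⟨p, hp⟩ with hpq
    set z : TorSum G := DirectSum.of (fun q : Nat.Primes => (pTor G q.1)) pq ⟨y, hpy⟩ with hzdef
    have hiz : iotaHom G z = y := by rw [hzdef, iotaHom, toAddMonoid_of]; rfl
    have hgz : toAddMonoid φ z = 0 := by
      have := DFunLike.congr_fun hg z
      rw [AddMonoidHom.comp_apply, hiz] at this
      rw [← this, hydef, map_nsmul, ha, smul_zero]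
    have hz0 : z = 0 := hf0 (hgz.trans (map_zero (toAddMonoid φ)).symm)
    have h00 : DirectSum.of (fun q : Nat.Primes => (pTor G q.1)) pq ⟨y, hpy⟩
        = DirectSum.of (fun q : Nat.Primes => (pTor G q.1)) pq 0 := by
      rw [← hzdef, hz0]
      exact (map_zero _).symm
    have : (⟨y, hpy⟩ : pTor G p) = 0 := DirectSum.of_injective pq h00
    exact hy0 (congrArg Subtype.val this)
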